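/- Let F be a field of characteristic zero, G a group, and S an F-subspace of F[G]. Then S is a Schur module (i.e., S is the F-span of the simple quantities of some partition of G into finite sets) if and only if S is closed under the Hadamard product and every g ∈ G lies in the support of some element of S. -/

import Mathlib

/-- The Hadamard (coefficientwise) product on the group algebra. -/
noncomputable def hadamard {F G : Type*} [Semiring F]
    (α β : MonoidAlgebra F G) : MonoidAlgebra F G :=
  MonoidAlgebra.ofCoeff (Finsupp.zipWith (· * ·) (mul_zero 0) α.coeff β.coeff)

/-- The simple quantity `C̄ = ∑_{g ∈ C} g` of a finite subset of `G`. -/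
noncomputable def simpleQuantity (F : Type*) {G : Type*} [Semiring F] (C : Finset G) :
    MonoidAlgebra F G :=
  ∑ g ∈ C, MonoidAlgebra.single g 1

/-- A partition of `G` into finite (nonempty) classes, i.e. a partition of finite support. -/
structure FinPartition (G : Type*) where
  classes : Set (Finset G)
  nonempty : ∀ C ∈ classes, C.Nonempty
  existsUnique_mem : ∀ g : G, ∃! C, C ∈ classes ∧ g ∈ C

/-- The Schur module associated to a partition of finite support: the `F`-span of the
simple quantities of the classes. -/
noncomputable def schurModule (F : Type*) {G : Type*} [Field F] (P : FinPartition G) :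
    Submodule F (MonoidAlgebra F G) :=
  Submodule.span F (simpleQuantity F '' P.classes)

section Aux
variable {F G : Type*} [Field F]

instance maCoeFun : CoeFun (MonoidAlgebra F G) (fun _ => G → F) := ⟨fun α => α.coeff⟩

lemma ma_add_apply (α β : MonoidAlgebra F G) (g : G) : (α + β) g = α g + β g := rfl
lemma ma_smul_apply (c : F) (α : MonoidAlgebra F G) (g : G) : (c • α) g = c * α g := rfl
lemma ma_zero_apply (g : G) : (0 : MonoidAlgebra F G) g = 0 := rfl
lemma ma_sub_apply (α β : MonoidAlgebra F G) (g : G) : (α - β) g = α g - β g :=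
  Finsupp.sub_apply α.coeff β.coeff g

lemma hadamard_apply (α β : MonoidAlgebra F G) (g : G) :
    hadamard α β g = α g * β g := rfl

lemma simpleQuantity_apply [DecidableEq G] (C : Finset G) (g : G) :
    simpleQuantity F C g = if g ∈ C then 1 else 0 := by
  rw [simpleQuantity]
  rw [MonoidAlgebra.coeff_sum, Finsupp.finset_sum_apply]
  simp [MonoidAlgebra.coeff_single, Finsupp.single_apply]

lemma ma_sum_apply {ι : Type*} (s : Finset ι) (f : ι → MonoidAlgebra F G) (g : G) :
    (∑ i ∈ s, f i) g = ∑ i ∈ s, f i g := by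
  rw [MonoidAlgebra.coeff_sum, Finsupp.finset_sum_apply]

lemma hadamard_sq [DecidableEq G] (C D : Finset G) :
    hadamard (simpleQuantity F C) (simpleQuantity F D)
      = simpleQuantity F (C ∩ D) := by
  ext g
  simp only [hadamard_apply, simpleQuantity_apply, Finset.mem_inter]
  split_ifs with h1 h2 h3 <;> simp_all

lemma hadamard_add_left (α β γ : MonoidAlgebra F G) :
    hadamard (α + β) γ = hadamard α γ + hadamard β γ := by
  ext g; simp only [hadamard_apply, ma_add_apply]; ring

lemma hadamard_add_right (α β γ : MonoidAlgebra F G) :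
    hadamard α (β + γ) = hadamard α β + hadamard α γ := by
  ext g; simp only [hadamard_apply, ma_add_apply]; ring

lemma hadamard_smul_left (c : F) (α β : MonoidAlgebra F G) :
    hadamard (c • α) β = c • hadamard α β := by
  ext g; simp only [hadamard_apply, ma_smul_apply]; ring

lemma hadamard_smul_right (c : F) (α β : MonoidAlgebra F G) :
    hadamard α (c • β) = c • hadamard α β := by
  ext g; simp only [hadamard_apply, ma_smul_apply]; ring

lemma hadamard_zero_left (β : MonoidAlgebra F G) : hadamard 0 β = 0 := by
  ext g; simp only [hadamard_apply, ma_zero_apply]; ring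

lemma hadamard_zero_right (β : MonoidAlgebra F G) : hadamard β 0 = 0 := by
  ext g; simp only [hadamard_apply, ma_zero_apply]; ring

/-- Level-set indicators of elements of a Hadamard-closed submodule lie in the submodule. -/
lemma level_mem [DecidableEq G] [DecidableEq F] {S : Submodule F (MonoidAlgebra F G)}
    (hS : ∀ α ∈ S, ∀ β ∈ S, hadamard α β ∈ S)
    {α : MonoidAlgebra F G} (hα : α ∈ S) {c : F} (hc : c ≠ 0) :
    simpleQuantity F (α.coeff.support.filter (fun h => α h = c)) ∈ S := by
  set hp : ℕ → MonoidAlgebra F G := fun n => Nat.rec α (fun _ ih => hadamard ih α) n with hhp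
  have hpS : ∀ n, hp n ∈ S := by
    intro n; induction n with
    | zero => exact hα
    | succ n ih => exact hS _ ih _ hα
  have hpapp : ∀ n g, hp n g = (α g) ^ (n + 1) := by
    intro n; induction n with
    | zero => intro g; simp [hhp, pow_one]
    | succ n ih =>
        intro g
        rw [show hp (n+1) = hadamard (hp n) α from rfl, hadamard_apply, ih]; ring
  set s : Finset F := insert 0 (α.coeff.support.image α.coeff) with hs
  set f : F → F := fun x => if x = c then 1 else 0 with hf
  set p : Polynomial F := Lagrange.interpolate s id f with hpdef
  have hinj : Set.InjOn id (s : Set F) := Function.injective_id.injOn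
  have hnode : ∀ g : G, α g ∈ s := by
    intro g
    by_cases h : α g = 0
    · rw [h]; exact Finset.mem_insert_self _ _
    · exact Finset.mem_insert_of_mem (Finset.mem_image_of_mem α.coeff (Finsupp.mem_support_iff.2 h))
  have heval : ∀ g : G, p.eval (α g) = f (α g) := fun g =>
    Lagrange.eval_interpolate_at_node f hinj (hnode g)
  have hp0 : p.coeff 0 = 0 := by
    rw [Polynomial.coeff_zero_eq_eval_zero]
    have h0 : (0 : F) ∈ s := Finset.mem_insert_self _ _
    have := Lagrange.eval_interpolate_at_node f hinj h0
    simp only [id_eq] at this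
    rw [← hpdef] at this
    rw [this, hf]
    simp [hc.symm]
  have key : simpleQuantity F (α.coeff.support.filter (fun h => α h = c))
      = ∑ i ∈ Finset.range p.natDegree, p.coeff (i + 1) • hp i := by
    ext g
    rw [simpleQuantity_apply, ma_sum_apply]
    have h1 : ∑ i ∈ Finset.range p.natDegree, (p.coeff (i + 1) • hp i) g
        = ∑ i ∈ Finset.range p.natDegree, p.coeff (i + 1) * (α g) ^ (i + 1) := by
      refine Finset.sum_congr rfl fun i _ => ?_
      rw [ma_smul_apply, hpapp]
    rw [h1]
    have hev : p.eval (α g)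
        = ∑ i ∈ Finset.range p.natDegree, p.coeff (i + 1) * (α g) ^ (i + 1) := by
      rw [Polynomial.eval_eq_sum_range, Finset.sum_range_succ']
      simp [hp0]
    rw [← hev, heval, hf]
    by_cases h : α g = c
    · have : g ∈ α.coeff.support := Finsupp.mem_support_iff.2 (h ▸ hc)
      simp [h, this]
    · simp [h]
  rw [key]
  exact Submodule.sum_mem S fun i _ => Submodule.smul_mem S _ (hpS i)

end Aux

theorem stmt7 {F G : Type*} [Field F] [CharZero F] [Group G]
    (S : Submodule F (MonoidAlgebra F G)) :
    (∃ P : FinPartition G, S = schurModule F P) ↔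
      ((∀ α ∈ S, ∀ β ∈ S, hadamard α β ∈ S) ∧
        ∀ g : G, ∃ α ∈ S, g ∈ α.coeff.support) := by
  classical
  constructor
  · -- forward direction
    rintro ⟨P, rfl⟩
    constructor
    · -- closure under hadamard
      have gen : ∀ C ∈ P.classes, ∀ D ∈ P.classes,
          hadamard (simpleQuantity F C) (simpleQuantity F D) ∈ schurModule F P := by
        intro C hC D hD
        rw [hadamard_sq]
        by_cases h : C = D
        · subst h
          rw [Finset.inter_self]
          exact Submodule.subset_span ⟨C, hC, rfl⟩
        · have : C ∩ D = ∅ := by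
            by_contra hne
            obtain ⟨x, hx⟩ := Finset.nonempty_of_ne_empty hne
            rw [Finset.mem_inter] at hx
            obtain ⟨C₀, -, hu⟩ := P.existsUnique_mem x
            exact h ((hu C ⟨hC, hx.1⟩).trans (hu D ⟨hD, hx.2⟩).symm)
          rw [this]
          simp only [simpleQuantity, Finset.sum_empty]
          exact Submodule.zero_mem _
      intro α hα β hβ
      refine Submodule.span_induction
        (p := fun α _ => ∀ β ∈ schurModule F P, hadamard α β ∈ schurModule F P)
        ?_ ?_ ?_ ?_ hα β hβ
      · rintro x ⟨C, hC, rfl⟩ β hβ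
        refine Submodule.span_induction
          (p := fun β _ => hadamard (simpleQuantity F C) β ∈ schurModule F P)
          ?_ ?_ ?_ ?_ hβ
        · rintro y ⟨D, hD, rfl⟩
          exact gen C hC D hD
        · show hadamard (simpleQuantity F C) 0 ∈ schurModule F P
          rw [hadamard_zero_right]; exact Submodule.zero_mem _
        · intro y z _ _ hy hz
          show hadamard (simpleQuantity F C) (y + z) ∈ schurModule F P
          rw [hadamard_add_right]; exact Submodule.add_mem _ hy hz
        · intro a y _ hy
          show hadamard (simpleQuantity F C) (a • y) ∈ schurModule F P
          rw [hadamard_smul_right]; exact Submodule.smul_mem _ a hy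
      · intro β hβ
        show hadamard 0 β ∈ schurModule F P
        rw [hadamard_zero_left]; exact Submodule.zero_mem _
      · intro x y _ _ hx hy β hβ
        show hadamard (x + y) β ∈ schurModule F P
        rw [hadamard_add_left]; exact Submodule.add_mem _ (hx β hβ) (hy β hβ)
      · intro a x _ hx β hβ
        show hadamard (a • x) β ∈ schurModule F P
        rw [hadamard_smul_left]; exact Submodule.smul_mem _ a (hx β hβ)
    · -- supports cover G
      intro g
      obtain ⟨C, ⟨hC, hgC⟩, -⟩ := P.existsUnique_mem g
      refine ⟨simpleQuantity F C, Submodule.subset_span ⟨C, hC, rfl⟩, ?_⟩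
      rw [Finsupp.mem_support_iff, simpleQuantity_apply, if_pos hgC]
      exact one_ne_zero
  · -- reverse direction
    rintro ⟨hS, hsupp⟩
    -- every g has a finite "indicator" class in S
    have hex : ∀ g : G, ∃ C : Finset G, (g ∈ C ∧ simpleQuantity F C ∈ S) ∧
        ∀ D : Finset G, g ∈ D → simpleQuantity F D ∈ S → C ⊆ D := by
      intro g
      obtain ⟨α, hαS, hg⟩ := hsupp g
      rw [Finsupp.mem_support_iff] at hg
      set T : Set ℕ := {n | ∃ C : Finset G, (g ∈ C ∧ simpleQuantity F C ∈ S) ∧ C.card = n}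
        with hT
      have hTne : T.Nonempty := by
        refine ⟨_, α.coeff.support.filter (fun h => α h = α g), ⟨?_, level_mem hS hαS hg⟩, rfl⟩
        rw [Finset.mem_filter]
        exact ⟨Finsupp.mem_support_iff.2 hg, rfl⟩
      obtain ⟨C, ⟨hgC, hCS⟩, hCcard⟩ := Nat.sInf_mem hTne
      refine ⟨C, ⟨hgC, hCS⟩, fun D hgD hDS => ?_⟩
      have hCD : simpleQuantity F (C ∩ D) ∈ S := by
        rw [← hadamard_sq]; exact hS _ hCS _ hDS
      have hmemT : (C ∩ D).card ∈ T := ⟨C ∩ D, ⟨Finset.mem_inter.2 ⟨hgC, hgD⟩, hCD⟩, rfl⟩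
      have hle : C.card ≤ (C ∩ D).card := hCcard ▸ Nat.sInf_le hmemT
      have : C ∩ D = C := Finset.eq_of_subset_of_card_le Finset.inter_subset_left hle
      intro x hx
      exact Finset.mem_inter.1 (this ▸ hx) |>.2
    choose cls hcls using hex
    have hclmem : ∀ g, g ∈ cls g := fun g => (hcls g).1.1
    have hclS : ∀ g, simpleQuantity F (cls g) ∈ S := fun g => (hcls g).1.2
    have hclsmin : ∀ g, ∀ D : Finset G, g ∈ D → simpleQuantity F D ∈ S → cls g ⊆ D :=
      fun g => (hcls g).2
    -- characterization of the classes
    have hchar : ∀ g h : G, h ∈ cls g ↔ ∀ β ∈ S, β h = β g := by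
      intro g h
      constructor
      · intro hh β hβ
        set δ : MonoidAlgebra F G := β + (1 - β g) • simpleQuantity F (cls g) with hδ
        have hδS : δ ∈ S := Submodule.add_mem _ hβ (Submodule.smul_mem _ _ (hclS g))
        have hδg : δ g = 1 := by
          rw [hδ, ma_add_apply, ma_smul_apply, simpleQuantity_apply, if_pos (hclmem g)]
          ring
        have hLS : simpleQuantity F (δ.coeff.support.filter (fun x => δ x = 1)) ∈ S :=
          level_mem hS hδS one_ne_zero
        have hgL : g ∈ δ.coeff.support.filter (fun x => δ x = 1) := by
          rw [Finset.mem_filter, Finsupp.mem_support_iff, hδg]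
          exact ⟨one_ne_zero, rfl⟩
        have hsub := hclsmin g _ hgL hLS
        have hhL := hsub hh
        rw [Finset.mem_filter] at hhL
        have hδh : δ h = 1 := hhL.2
        rw [hδ, ma_add_apply, ma_smul_apply, simpleQuantity_apply, if_pos hh] at hδh
        have : β h = β g := by linear_combination hδh
        exact this
      · intro hall
        have h1 : simpleQuantity F (cls g) h = simpleQuantity F (cls g) g :=
          hall _ (hclS g)
        rw [simpleQuantity_apply, simpleQuantity_apply, if_pos (hclmem g)] at h1
        by_contra hc
        rw [if_neg hc] at h1
        exact zero_ne_one h1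
    have hclseq : ∀ g g' : G, g' ∈ cls g → cls g' = cls g := by
      intro g g' hg'
      have hgg' : ∀ β ∈ S, β g' = β g := (hchar g g').1 hg'
      ext h
      rw [hchar, hchar]
      constructor
      · intro hh β hβ; rw [hh β hβ, hgg' β hβ]
      · intro hh β hβ; rw [hh β hβ, hgg' β hβ]
    set P : FinPartition G :=
      { classes := Set.range cls
        nonempty := by rintro C ⟨g, rfl⟩; exact ⟨g, hclmem g⟩
        existsUnique_mem := by
          intro g
          refine ⟨cls g, ⟨⟨g, rfl⟩, hclmem g⟩, ?_⟩
          rintro D ⟨⟨g', rfl⟩, hgD⟩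
          exact (hclseq g' g hgD).symm } with hP
    refine ⟨P, le_antisymm ?_ ?_⟩
    · -- S ≤ schurModule
      intro α hα
      have main : ∀ n : ℕ, ∀ α ∈ S, α.coeff.support.card ≤ n → α ∈ schurModule F P := by
        intro n
        induction n with
        | zero =>
            intro α hα hcard
            have : α.coeff.support = ∅ := Finset.card_eq_zero.1 (Nat.le_zero.1 hcard)
            rw [MonoidAlgebra.coeff_eq_zero.1 (Finsupp.support_eq_empty.1 this)]
            exact Submodule.zero_mem _
        | succ n ih =>
            intro α hα hcard
            by_cases hemp : α.coeff.support = ∅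
            · rw [MonoidAlgebra.coeff_eq_zero.1 (Finsupp.support_eq_empty.1 hemp)]; exact Submodule.zero_mem _
            · obtain ⟨g, hg⟩ := Finset.nonempty_of_ne_empty hemp
              set α' : MonoidAlgebra F G := α - α g • simpleQuantity F (cls g) with hα'
              have hα'S : α' ∈ S := Submodule.sub_mem _ hα (Submodule.smul_mem _ _ (hclS g))
              have hsub : α'.coeff.support ⊆ α.coeff.support.erase g := by
                intro h hh
                rw [Finsupp.mem_support_iff] at hh
                rw [hα', ma_sub_apply, ma_smul_apply, simpleQuantity_apply] at hh
                by_cases hcls : h ∈ cls g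
                · exfalso
                  have : α h = α g := (hchar g h).1 hcls α hα
                  rw [if_pos hcls, this] at hh
                  simp at hh
                · rw [if_neg hcls, mul_zero, sub_zero] at hh
                  refine Finset.mem_erase.2 ⟨?_, Finsupp.mem_support_iff.2 hh⟩
                  intro heq; exact hcls (heq ▸ hclmem g)
              have hcard' : α'.coeff.support.card ≤ n := by
                calc α'.coeff.support.card ≤ (α.coeff.support.erase g).card := Finset.card_le_card hsub
                _ = α.coeff.support.card - 1 := Finset.card_erase_of_mem hg
                _ ≤ n := by omega
              have hsq : simpleQuantity F (cls g) ∈ schurModule F P :=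
                Submodule.subset_span ⟨cls g, ⟨g, rfl⟩, rfl⟩
              have := ih α' hα'S hcard'
              have : α = α' + α g • simpleQuantity F (cls g) := by rw [hα']; abel
              rw [this]
              exact Submodule.add_mem _ (ih α' hα'S hcard')
                (Submodule.smul_mem _ _ hsq)
      exact main α.coeff.support.card α hα le_rfl
    · -- schurModule ≤ S
      rw [schurModule, Submodule.span_le]
      rintro x ⟨C, ⟨g, rfl⟩, rfl⟩
      exact hclS g
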